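/- Let α = 2π/3 and β one of 4π/9, π/2, 2π/5 (corresponding to the extra vertex αβ³, β⁴, or β⁵). Among the pentagons αⁿβ^{5−n} (0 ≤ n ≤ 5), the angle sum equation nα + (5−n)β = 3π + 4π/f yields an even integer f ≥ 16 only for n = 4, giving f = 36, 24, 60 respectively. -/

import Mathlib

private lemma key_16 (f : ℕ) (hf0 : (f:ℝ) ≠ 0) (a : ℝ)
    (h : a * Real.pi = 3 * Real.pi + 4 * Real.pi / f) : (f:ℝ) * (a - 3) = 4 := by
  have hπ := Real.pi_ne_zero
  apply mul_right_cancel₀ hπ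
  field_simp at h
  linear_combination Real.pi * h

/-- Let `α = 2π/3` and `β` be one of `4π/9`, `π/2`, `2π/5` (corresponding to the
extra vertex `αβ³`, `β⁴` or `β⁵`).  Among the pentagons `αⁿβ^{5−n}` with
`0 ≤ n ≤ 5`, the angle sum equation `nα + (5−n)β = 3π + 4π/f` admits an even
integer `f ≥ 16` only for `n = 4`, giving `f = 36, 24, 60` respectively. -/
theorem stmt_16 (n f : ℕ) (hn : n ≤ 5) (hf : 16 ≤ f) (heven : 2 ∣ f) :
    (((n : ℝ) * (2 * Real.pi / 3) + ((5 - n : ℕ) : ℝ) * (4 * Real.pi / 9)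
        = 3 * Real.pi + 4 * Real.pi / (f : ℝ)) ↔ (n = 4 ∧ f = 36))
    ∧ (((n : ℝ) * (2 * Real.pi / 3) + ((5 - n : ℕ) : ℝ) * (Real.pi / 2)
        = 3 * Real.pi + 4 * Real.pi / (f : ℝ)) ↔ (n = 4 ∧ f = 24))
    ∧ (((n : ℝ) * (2 * Real.pi / 3) + ((5 - n : ℕ) : ℝ) * (2 * Real.pi / 5)
        = 3 * Real.pi + 4 * Real.pi / (f : ℝ)) ↔ (n = 4 ∧ f = 60)) := by
  have hf0 : (f:ℝ) ≠ 0 := by positivity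
  have hfR : (16:ℝ) ≤ f := by exact_mod_cast hf
  refine ⟨⟨fun h => ?_, fun ⟨h1, h2⟩ => ?_⟩, ⟨fun h => ?_, fun ⟨h1, h2⟩ => ?_⟩,
          ⟨fun h => ?_, fun ⟨h1, h2⟩ => ?_⟩⟩
  · interval_cases n <;> norm_num at h
    · have := key_16 f hf0 (20/9) (by linear_combination h); nlinarith
    · have := key_16 f hf0 (22/9) (by linear_combination h); nlinarith
    · have := key_16 f hf0 (24/9) (by linear_combination h); nlinarith
    · have := key_16 f hf0 (26/9) (by linear_combination h); nlinarith
    · have := key_16 f hf0 (28/9) (by linear_combination h)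
      exact ⟨rfl, by exact_mod_cast (by linarith : (f:ℝ) = 36)⟩
    · have := key_16 f hf0 (10/3) (by linear_combination h); nlinarith
  · subst h1 h2; norm_num; field_simp; ring
  · interval_cases n <;> norm_num at h
    · have := key_16 f hf0 (5/2) (by linear_combination h); nlinarith
    · have := key_16 f hf0 (8/3) (by linear_combination h); nlinarith
    · have := key_16 f hf0 (17/6) (by linear_combination h); nlinarith
    · have := key_16 f hf0 (3) (by linear_combination h); nlinarith
    · have := key_16 f hf0 (19/6) (by linear_combination h)
      exact ⟨rfl, by exact_mod_cast (by linarith : (f:ℝ) = 24)⟩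
    · have := key_16 f hf0 (10/3) (by linear_combination h); nlinarith
  · subst h1 h2; norm_num; field_simp; ring
  · interval_cases n <;> norm_num at h
    · have := key_16 f hf0 (2) (by linear_combination h); nlinarith
    · have := key_16 f hf0 (34/15) (by linear_combination h); nlinarith
    · have := key_16 f hf0 (38/15) (by linear_combination h); nlinarith
    · have := key_16 f hf0 (42/15) (by linear_combination h); nlinarith
    · have := key_16 f hf0 (46/15) (by linear_combination h)
      exact ⟨rfl, by exact_mod_cast (by linarith : (f:ℝ) = 60)⟩
    · have := key_16 f hf0 (10/3) (by linear_combination h); nlinarith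
  · subst h1 h2; norm_num; field_simp; ring
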